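/- In the N-parameter frozen percolation process on the square lattice, if the final open cluster of the origin has diameter k < N, then there is a vertex at distance at most k + 1 from the origin that belongs to a giant cluster (a final open cluster of diameter ≥ N). -/

import Mathlib

open MeasureTheory ProbabilityTheory Filter Set
open scoped ENNReal

namespace Frozen

/-- Vertices of the square lattice. -/
abbrev V : Type := ℤ × ℤ

/-- Nearest-neighbour adjacency on `ℤ²`. -/
def adj (v w : V) : Prop := |v.1 - w.1| + |v.2 - w.2| = 1

/-- Edges of the square lattice, oriented rightwards or upwards so that each
(unordered) nearest-neighbour edge is represented exactly once. -/
def Edge : Type := {e : V × V // e.2 = e.1 + (1, 0) ∨ e.2 = e.1 + (0, 1)}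

/-- `e` is the edge with endpoints `x` and `y`. -/
def EdgeOf (x y : V) (e : Edge) : Prop := e.1 = (x, y) ∨ e.1 = (y, x)

/-- Connectivity via a set `A` of edges. -/
def ConnIn (A : Set Edge) : V → V → Prop :=
  Relation.ReflTransGen (fun x y => ∃ e ∈ A, EdgeOf x y e)

/-- The cluster of `v` in the graph whose open edges are `A`. -/
def cluster (A : Set Edge) (v : V) : Set V := {w | ConnIn A v w}

/-- Distance on the lattice: `|v - w| = max(|v₁-w₁|, |v₂-w₂|)`. -/
def vdist (v w : V) : ℕ := max (v.1 - w.1).natAbs (v.2 - w.2).natAbs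

/-- Diameter of a set of vertices, `sup {|v-w| : v,w ∈ W}`, as an extended real. -/
noncomputable def diam (W : Set V) : ℝ≥0∞ :=
  ⨆ v ∈ W, ⨆ w ∈ W, (vdist v w : ℝ≥0∞)

/-- `F` (the set of edges that ever open) is a realization of the `N`-parameter frozen
percolation process with edge labels `τ`: an edge `e` opens (at time `τ e`) iff at that time
neither of its endpoints lies in an open cluster of diameter `≥ N`, where the edges open just
before time `τ e` are those `f ∈ F` with `τ f < τ e`. -/
def IsFrozenEvolution (N : ℕ) (τ : Edge → ℝ) (F : Set Edge) : Prop :=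
  ∀ e : Edge, e ∈ F ↔
    (diam (cluster {f ∈ F | τ f < τ e} e.1.1) < N ∧
     diam (cluster {f ∈ F | τ f < τ e} e.1.2) < N)

/-- Embedding of lattice vertices in the plane. -/
def toR2 (v : V) : ℝ × ℝ := ((v.1 : ℝ), (v.2 : ℝ))

/-- Embedding of dual lattice vertices (indexed by `ℤ²`) in the plane: `v + (1/2, 1/2)`. -/
noncomputable def dualToR2 (d : V) : ℝ × ℝ := ((d.1 : ℝ) + 1/2, (d.2 : ℝ) + 1/2)

/-- The box `B(s) = [-s/2, s/2]²` (as a region of the plane). -/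
def box (s : ℝ) : Set (ℝ × ℝ) := Icc (-s/2) (s/2) ×ˢ Icc (-s/2) (s/2)

/-- An axis-parallel rectangle `[x₁,x₂] × [y₁,y₂]`. -/
def rect (x₁ x₂ y₁ y₂ : ℝ) : Set (ℝ × ℝ) := Icc x₁ x₂ ×ˢ Icc y₁ y₂

/-- The rectangle `R`: length `(l+(b-c)/2)N`, width `εN`, whose west side is a
central subsegment of the east side of `B(cN)`. -/
def regR (b c l ε N : ℝ) : Set (ℝ × ℝ) :=
  rect (c*N/2) (c*N/2 + (l + (b - c)/2)*N) (-(ε*N)/2) (ε*N/2)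

/-- `Λ = B(bN) ∪ R`. -/
def regLam (b c l ε N : ℝ) : Set (ℝ × ℝ) := box (b*N) ∪ regR b c l ε N

/-- `Λ'`: all points of the plane at distance `≤ εN` from `Λ`
(the plane `ℝ × ℝ` carries the max-metric). -/
def regLam' (b c l ε N : ℝ) : Set (ℝ × ℝ) :=
  {p | ∃ q ∈ regLam b c l ε N, dist p q ≤ ε*N}

/-- `R'`: the leftmost part, of length `4εN`, of the rectangle of width `3εN` and
length `lN` which is the part of `Λ'` sticking out of `B((b+2ε)N)`. -/
def regR' (b ε N : ℝ) : Set (ℝ × ℝ) :=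
  rect ((b/2 + ε)*N) ((b/2 + 5*ε)*N) (-(3*ε*N/2)) (3*ε*N/2)

/-- `L₁`: the rectangle whose south side is the rightmost segment of length `εN` of the
north side of `B(cN)`, and whose north side is part of the boundary of `Λ'`. -/
def regL1 (b c ε N : ℝ) : Set (ℝ × ℝ) :=
  rect (c*N/2 - ε*N) (c*N/2) (c*N/2) ((b/2 + ε)*N)

/-- `L₂`: the mirror image of `L₁` below `B(cN)`. -/
def regL2 (b c ε N : ℝ) : Set (ℝ × ℝ) :=
  rect (c*N/2 - ε*N) (c*N/2) (-((b/2 + ε)*N)) (-(c*N/2))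

/-- A set `Γ` of vertices surrounds the vertex `v`: every infinite nearest-neighbour
path started at `v` that leaves every bounded set must meet `Γ`. -/
def Surrounds (Γ : Set V) (v : V) : Prop :=
  ∀ f : ℕ → V, f 0 = v → (∀ i, adj (f i) (f (i+1))) →
    (∀ M : ℕ, ∃ i, M ≤ vdist (f i) (0, 0)) → ∃ i, f i ∈ Γ

/-- The primal edge `e` is crossed by the dual edge between the dual vertices `d` and `d'`
(dual vertices are indexed by `ℤ²`, the dual vertex `d` sitting at `d + (1/2,1/2)`). -/
def DualCrosses (d d' : V) (e : Edge) : Prop :=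
  (d' = d + (1,0) ∧ e.1 = ((d.1+1, d.2), (d.1+1, d.2+1))) ∨
  (d = d' + (1,0) ∧ e.1 = ((d'.1+1, d'.2), (d'.1+1, d'.2+1))) ∨
  (d' = d + (0,1) ∧ e.1 = ((d.1, d.2+1), (d.1+1, d.2+1))) ∨
  (d = d' + (0,1) ∧ e.1 = ((d'.1, d'.2+1), (d'.1+1, d'.2+1)))

/-- A dual circuit `π` surrounds the vertex `v`: every infinite nearest-neighbour path
started at `v` that leaves every bounded set uses some primal edge crossed by `π`. -/
def DualSurrounds {n : ℕ} (π : ZMod n → V) (v : V) : Prop :=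
  ∀ f : ℕ → V, f 0 = v → (∀ i, adj (f i) (f (i+1))) →
    (∀ M : ℕ, ∃ i, M ≤ vdist (f i) (0, 0)) →
    ∃ i, ∃ j : ZMod n, ∃ e : Edge, EdgeOf (f i) (f (i+1)) e ∧ DualCrosses (π j) (π (j+1)) e

/-- A `t`-open lattice path (with respect to the labels `τ`). -/
def OpenPath (τ : Edge → ℝ) (t : ℝ) {k : ℕ} (p : Fin (k+1) → V) : Prop :=
  ∀ i : Fin k, ∃ e : Edge, EdgeOf (p i.castSucc) (p i.succ) e ∧ τ e < t

/-- A `t`-closed dual lattice path. -/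
def ClosedDualPath (τ : Edge → ℝ) (t : ℝ) {k : ℕ} (q : Fin (k+1) → V) : Prop :=
  ∀ i : Fin k, ∃ e : Edge, DualCrosses (q i.castSucc) (q i.succ) e ∧ t ≤ τ e

/-- A `t`-open circuit (closed path). -/
def OpenCircuit (τ : Edge → ℝ) (t : ℝ) {n : ℕ} (γ : ZMod n → V) : Prop :=
  ∀ i : ZMod n, ∃ e : Edge, EdgeOf (γ i) (γ (i+1)) e ∧ τ e < t

/-- A `t`-closed dual circuit. -/
def ClosedDualCircuit (τ : Edge → ℝ) (t : ℝ) {n : ℕ} (π : ZMod n → V) : Prop :=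
  ∀ i : ZMod n, ∃ e : Edge, DualCrosses (π i) (π (i+1)) e ∧ t ≤ τ e

/-- There is a `t`-open horizontal crossing of the rectangle `[x₁,x₂] × [y₁,y₂]`:
a `t`-open path inside the rectangle joining its left side to its right side. -/
def HorizCrossing (τ : Edge → ℝ) (t x₁ x₂ y₁ y₂ : ℝ) : Prop :=
  ∃ k : ℕ, ∃ p : Fin (k+1) → V,
    (∀ i, toR2 (p i) ∈ rect x₁ x₂ y₁ y₂) ∧ OpenPath τ t p ∧
    ((p 0).1 : ℝ) ≤ x₁ + 1 ∧ x₂ - 1 ≤ ((p (Fin.last k)).1 : ℝ)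

/-- There is a `t`-open circuit in the annulus `outer \ inner` surrounding `inner`. -/
def OpenCircuitInAnnulus (τ : Edge → ℝ) (t : ℝ) (outer inner : Set (ℝ × ℝ)) : Prop :=
  ∃ n : ℕ, 0 < n ∧ ∃ γ : ZMod n → V,
    (∀ i, toR2 (γ i) ∈ outer \ inner) ∧ OpenCircuit τ t γ ∧
    (∀ v : V, toR2 v ∈ inner → Surrounds (Set.range γ) v)

/-- There is a `t`-closed dual circuit in the annulus `outer \ inner` surrounding `inner`. -/
def ClosedDualCircuitInAnnulus (τ : Edge → ℝ) (t : ℝ) (outer inner : Set (ℝ × ℝ)) : Prop :=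
  ∃ n : ℕ, 0 < n ∧ ∃ π : ZMod n → V,
    (∀ i, dualToR2 (π i) ∈ outer \ inner) ∧ ClosedDualCircuit τ t π ∧
    (∀ v : V, toR2 v ∈ inner → DualSurrounds π v)

lemma vdist_comm (v w : V) : vdist v w = vdist w v := by
  unfold vdist
  congr 1 <;> omega

lemma vdist_triangle (a b c : V) : vdist a c ≤ vdist a b + vdist b c := by
  unfold vdist
  have h1 : (a.1 - c.1).natAbs ≤ (a.1 - b.1).natAbs + (b.1 - c.1).natAbs := by omega
  have h2 : (a.2 - c.2).natAbs ≤ (a.2 - b.2).natAbs + (b.2 - c.2).natAbs := by omega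
  exact max_le (h1.trans (Nat.add_le_add (le_max_left _ _) (le_max_left _ _)))
    (h2.trans (Nat.add_le_add (le_max_right _ _) (le_max_right _ _)))

lemma le_diam {W : Set V} {v w : V} (hv : v ∈ W) (hw : w ∈ W) :
    (vdist v w : ℝ≥0∞) ≤ diam W := by
  unfold diam
  calc (vdist v w : ℝ≥0∞) ≤ ⨆ w ∈ W, (vdist v w : ℝ≥0∞) :=
        le_biSup (fun w => (vdist v w : ℝ≥0∞)) hw
    _ ≤ ⨆ v ∈ W, ⨆ w ∈ W, (vdist v w : ℝ≥0∞) :=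
        le_biSup (fun v => ⨆ w ∈ W, (vdist v w : ℝ≥0∞)) hv

lemma diam_mono {W W' : Set V} (h : W ⊆ W') : diam W ≤ diam W' :=
  iSup₂_le fun _ hv => iSup₂_le fun _ hw => le_diam (h hv) (h hw)

lemma cluster_mono {A B : Set Edge} (h : A ⊆ B) (v : V) : cluster A v ⊆ cluster B v :=
  fun _ hw => Relation.ReflTransGen.mono (fun _ _ ⟨e, he, hxy⟩ => ⟨e, h he, hxy⟩) _ _ hw

lemma edge_vdist (e : Edge) : vdist e.1.1 e.1.2 ≤ 1 := by
  rcases e.2 with h | h <;> rw [vdist, h] <;> simp [Prod.ext_iff]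

/-- In the `N`-parameter frozen percolation process, if the final open cluster
of the origin has diameter `k < N`, then there is a vertex at distance at most `k + 1` from the
origin that belongs to a giant cluster (a final open cluster of diameter `≥ N`). -/
theorem statement4 (N : ℕ) (hN : 0 < N)
    (τ : Edge → ℝ) (hτrange : ∀ e, τ e ∈ Set.Ioo (0:ℝ) 1) (hinj : Function.Injective τ)
    (F : Set Edge) (hF : IsFrozenEvolution N τ F)
    (k : ℕ) (hk : k < N) (hdiam : diam (cluster F (0, 0)) = (k : ℝ≥0∞)) :
    ∃ w : V, vdist w (0, 0) ≤ k + 1 ∧ (N : ℝ≥0∞) ≤ diam (cluster F w) := by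
  classical
  by_cases hall : ∀ e : Edge, (e.1.1 ∈ cluster F (0,0) ∨ e.1.2 ∈ cluster F (0,0)) → e ∈ F
  · exfalso
    have hmem : ∀ j : ℕ, (((j : ℤ), (0:ℤ)) : V) ∈ cluster F (0,0) := by
      intro j
      induction j with
      | zero => exact Relation.ReflTransGen.refl
      | succ j ih =>
        have hprop : ((((j:ℤ),(0:ℤ)), ((j:ℤ)+1,(0:ℤ))) : V × V).2
            = ((((j:ℤ),(0:ℤ)), ((j:ℤ)+1,(0:ℤ))) : V × V).1 + (1,0) ∨
            ((((j:ℤ),(0:ℤ)), ((j:ℤ)+1,(0:ℤ))) : V × V).2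
            = ((((j:ℤ),(0:ℤ)), ((j:ℤ)+1,(0:ℤ))) : V × V).1 + (0,1) := by
          left; simp [Prod.ext_iff]
        set e : Edge := ⟨(((j:ℤ),(0:ℤ)), ((j:ℤ)+1,(0:ℤ))), hprop⟩ with he
        have heF : e ∈ F := hall e (Or.inl ih)
        have hstep : (((j:ℤ)+1,(0:ℤ)) : V) ∈ cluster F (0,0) :=
          Relation.ReflTransGen.tail ih ⟨e, heF, Or.inl rfl⟩
        have hcast : (((j+1 : ℕ) : ℤ), (0:ℤ)) = (((j:ℤ)+1,(0:ℤ)) : V) := by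
          simp
        rw [hcast]
        exact hstep
    have hle : ((vdist (((k+1 : ℕ) : ℤ), (0:ℤ)) (0,0) : ℕ) : ℝ≥0∞) ≤ (k : ℝ≥0∞) := by
      rw [← hdiam]
      exact le_diam (hmem (k+1)) Relation.ReflTransGen.refl
    have hval : vdist ((((k+1 : ℕ)) : ℤ), (0:ℤ)) (0,0) = k + 1 := by
      simp [vdist]
      omega
    rw [hval] at hle
    have := Nat.cast_le.mp hle
    omega
  · push_neg at hall
    obtain ⟨e, hend, heF⟩ := hall
    have hnot : ¬(diam (cluster {f ∈ F | τ f < τ e} e.1.1) < N ∧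
        diam (cluster {f ∈ F | τ f < τ e} e.1.2) < N) := fun h => heF ((hF e).mpr h)
    have hsub : {f ∈ F | τ f < τ e} ⊆ F := fun f hf => hf.1
    have hk' : ∀ v ∈ cluster F (0,0), vdist v (0,0) ≤ k := by
      intro v hv
      have h := le_diam (W := cluster F (0,0)) Relation.ReflTransGen.refl hv
      rw [hdiam] at h
      rw [vdist_comm]
      exact_mod_cast h
    have hadj : vdist e.1.1 e.1.2 ≤ 1 := edge_vdist e
    have hd1 : vdist e.1.1 (0,0) ≤ k + 1 := by
      rcases hend with h | h
      · exact (hk' _ h).trans (Nat.le_succ _)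
      · have := vdist_triangle e.1.1 e.1.2 (0,0)
        have := hk' _ h
        omega
    have hd2 : vdist e.1.2 (0,0) ≤ k + 1 := by
      rcases hend with h | h
      · have h12 : vdist e.1.2 e.1.1 ≤ 1 := by rw [vdist_comm]; exact hadj
        have := vdist_triangle e.1.2 e.1.1 (0,0)
        have := hk' _ h
        omega
      · exact (hk' _ h).trans (Nat.le_succ _)
    rw [not_and_or] at hnot
    rcases hnot with h | h
    · exact ⟨e.1.1, hd1, (not_lt.mp h).trans (diam_mono (cluster_mono hsub _))⟩
    · exact ⟨e.1.2, hd2, (not_lt.mp h).trans (diam_mono (cluster_mono hsub _))⟩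

end Frozen
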